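/- Let l ≥ 1 and let n : Fin l → ℕ be positive with n_i ≠ n_j whenever i ≠ j, and set A = ∏_{i<l} Ł_{n_i} (componentwise operations). Then every proper subalgebra S of A embeds into a product ∏_{i<l} Ł_{d_i} where each d_i divides n_i and d_j ≠ n_j for at least one j: there exist d : Fin l → ℕ positive with d_i ∣ n_i for all i, d_j ≠ n_j for some j, and an injective homomorphism from S (with the operations induced from A) into ∏_{i<l} Ł_{d_i}. -/

import Mathlib

/-- The carrier of the Łukasiewicz chain Łₙ : {k/n : k ∈ ℕ, 0 ≤ k ≤ n} ⊆ ℚ. -/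
abbrev Luk (n : ℕ+) : Type := {x : ℚ // ∃ k : ℕ, k ≤ (n : ℕ) ∧ x = (k : ℚ) / (n : ℕ)}

/-- The constant 0 of Łₙ. -/
def lukZero (n : ℕ+) : Luk n := ⟨0, 0, Nat.zero_le _, by simp⟩

/-- The negation ¬x = 1 - x of Łₙ. -/
def lukNeg {n : ℕ+} (x : Luk n) : Luk n :=
  ⟨1 - x.1, by
    obtain ⟨k, hk, hx⟩ := x.2
    refine ⟨(n : ℕ) - k, Nat.sub_le _ _, ?_⟩
    have hn : ((n : ℕ) : ℚ) ≠ 0 := by exact_mod_cast n.pos.ne'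
    rw [hx, Nat.cast_sub hk, sub_div, div_self hn]⟩

/-- The truncated sum x ⊕ y = min 1 (x + y) of Łₙ. -/
def lukOplus {n : ℕ+} (x y : Luk n) : Luk n :=
  ⟨min 1 (x.1 + y.1), by
    obtain ⟨k, hk, hx⟩ := x.2
    obtain ⟨j, hj, hy⟩ := y.2
    refine ⟨min (n : ℕ) (k + j), min_le_left _ _, ?_⟩
    have hn : (0 : ℚ) < ((n : ℕ) : ℚ) := by exact_mod_cast n.pos
    rw [hx, hy, ← add_div]
    rcases le_total (k + j) (n : ℕ) with h | h
    · rw [min_eq_right h, min_eq_right]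
      · push_cast; ring_nf
      · rw [div_le_one hn]; exact_mod_cast h
    · rw [min_eq_left h, min_eq_left, div_self hn.ne']
      · rw [one_le_div hn]; exact_mod_cast h⟩

-- basic value lemmas
lemma luk_npos (n : ℕ+) : (0:ℚ) < ((n:ℕ):ℚ) := by exact_mod_cast n.pos

lemma luk_nonneg {n : ℕ+} (x : Luk n) : 0 ≤ x.1 := by
  obtain ⟨k, hk, hx⟩ := x.2
  rw [hx]; positivity

lemma luk_le_one {n : ℕ+} (x : Luk n) : x.1 ≤ 1 := by
  obtain ⟨k, hk, hx⟩ := x.2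
  rw [hx, div_le_one (luk_npos n)]; exact_mod_cast hk

lemma luk_pos_ge {n : ℕ+} (x : Luk n) (hx : x.1 ≠ 0) : 1 / ((n:ℕ):ℚ) ≤ x.1 := by
  obtain ⟨k, hk, he⟩ := x.2
  have hk1 : 1 ≤ k := by
    rcases Nat.eq_zero_or_pos k with h | h
    · exfalso; apply hx; rw [he, h]; simp
    · exact h
  rw [he]
  gcongr
  exact_mod_cast hk1

lemma luk_val_eq {n : ℕ+} {k j : ℕ} (h : (k:ℚ)/((n:ℕ):ℚ) = (j:ℚ)/((n:ℕ):ℚ)) : k = j := by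
  have h2 : (k:ℚ) = j := by
    field_simp at h; exact_mod_cast h
  exact_mod_cast h2

-- equiv with Fin (n+1)
noncomputable def lukEquiv (n : ℕ+) : Fin ((n:ℕ)+1) ≃ Luk n := by
  apply Equiv.ofBijective (fun k : Fin ((n:ℕ)+1) => (⟨((k:ℕ):ℚ)/((n:ℕ):ℚ), (k:ℕ), by omega, rfl⟩ : Luk n))
  constructor
  · intro a b hab
    have : (a:ℕ) = b := luk_val_eq (n := n) (congrArg Subtype.val hab)
    exact Fin.ext this
  · intro x
    obtain ⟨k, hk, he⟩ := x.2
    exact ⟨⟨k, by omega⟩, Subtype.ext he.symm⟩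

-- ℕ subset lemmas
section Kset
variable {K : Set ℕ} {n : ℕ}

lemma kset_gcd_mem (hadd : ∀ a ∈ K, ∀ b ∈ K, min n (a+b) ∈ K)
    (hle : ∀ a ∈ K, a ≤ n) (hneg : ∀ a ∈ K, n - a ∈ K) :
    ∀ a ∈ K, ∀ b ∈ K, Nat.gcd a b ∈ K := by
  have hsub : ∀ a ∈ K, ∀ b ∈ K, a - b ∈ K := by
    intro a ha b hb
    have h1 : min n ((n-a)+b) ∈ K := hadd _ (hneg a ha) _ hb
    have h2 := hneg _ h1
    have ha' := hle a ha
    have hb' := hle b hb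
    have : n - min n ((n-a)+b) = a - b := by omega
    rwa [this] at h2
  have gsub : ∀ a b : ℕ, b ≤ a → Nat.gcd (a-b) b = Nat.gcd a b := by
    intro a b hba
    apply Nat.dvd_antisymm
    · apply Nat.dvd_gcd
      · have := Nat.dvd_add (Nat.gcd_dvd_left (a-b) b) (Nat.gcd_dvd_right (a-b) b)
        rwa [Nat.sub_add_cancel hba] at this
      · exact Nat.gcd_dvd_right _ _
    · exact Nat.dvd_gcd (Nat.dvd_sub (Nat.gcd_dvd_left a b) (Nat.gcd_dvd_right a b))
        (Nat.gcd_dvd_right a b)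
  suffices h : ∀ c, ∀ a ∈ K, ∀ b ∈ K, a + b ≤ c → Nat.gcd a b ∈ K by
    intro a ha b hb; exact h (a+b) a ha b hb le_rfl
  intro c
  induction c with
  | zero =>
    intro a ha b hb hc
    have : a = 0 ∧ b = 0 := by omega
    simpa [this.1, this.2] using ha
  | succ c ih =>
    intro a ha b hb hc
    rcases Nat.eq_zero_or_pos b with hb0 | hb0
    · simpa [hb0] using ha
    rcases Nat.eq_zero_or_pos a with ha0 | ha0
    · simpa [ha0] using hb
    rcases le_total b a with hba | hab
    · rw [← gsub a b hba]
      exact ih _ (hsub a ha b hb) _ hb (by omega)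
    · rw [Nat.gcd_comm, ← gsub b a hab]
      exact ih _ (hsub b hb a ha) _ ha (by omega)

lemma kset_finsetGcd_mem (hgcd : ∀ a ∈ K, ∀ b ∈ K, Nat.gcd a b ∈ K) (h0 : 0 ∈ K) :
    ∀ F : Finset ℕ, (∀ a ∈ F, a ∈ K) → F.gcd id ∈ K := by
  intro F
  induction F using Finset.induction with
  | empty => intro _; simpa using h0
  | insert _ _ hnotmem ih =>
    intro hmem
    rw [Finset.gcd_insert]
    exact hgcd _ (hmem _ (Finset.mem_insert_self _ _)) _
      (ih fun a ha => hmem _ (Finset.mem_insert_of_mem ha))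

lemma kset_main (hnpos : 0 < n) (h0 : 0 ∈ K) (hn : n ∈ K)
    (hle : ∀ a ∈ K, a ≤ n)
    (hadd : ∀ a ∈ K, ∀ b ∈ K, min n (a+b) ∈ K)
    (hneg : ∀ a ∈ K, n - a ∈ K) :
    ∃ g : ℕ, g ∣ n ∧ 0 < g ∧ (∀ k ∈ K, g ∣ k) ∧ (∀ m, m * g ≤ n → m * g ∈ K) := by
  classical
  set F : Finset ℕ := (Finset.range (n+1)).filter (· ∈ K) with hF
  have hmemF : ∀ a, a ∈ F ↔ a ∈ K := by
    intro a
    simp only [hF, Finset.mem_filter, Finset.mem_range]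
    exact ⟨fun h => h.2, fun h => ⟨by have := hle a h; omega, h⟩⟩
  set g := F.gcd id with hg
  have hgK : g ∈ K :=
    kset_finsetGcd_mem (kset_gcd_mem hadd hle hneg) h0 F (fun a ha => (hmemF a).mp ha)
  have hdvd : ∀ k ∈ K, g ∣ k := fun k hk => Finset.gcd_dvd ((hmemF k).mpr hk)
  have hgn : g ∣ n := hdvd n hn
  have hgpos : 0 < g := Nat.pos_of_dvd_of_pos hgn hnpos
  refine ⟨g, hgn, hgpos, hdvd, ?_⟩
  intro m
  induction m with
  | zero => intro _; simpa using h0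
  | succ m ih =>
    intro hle'
    have h1 : m * g ∈ K := ih (by nlinarith)
    have h2 := hadd _ h1 _ hgK
    have : min n (m*g + g) = (m+1)*g := by
      rw [min_eq_right (by nlinarith)]; ring
    rwa [this] at h2

end Kset

-- scalar ℚ lemmas
lemma rat_min_div {n : ℕ+} (a b : ℕ) :
    ((min (n:ℕ) (a+b) : ℕ) : ℚ) / ((n:ℕ):ℚ) = min 1 ((a:ℚ)/((n:ℕ):ℚ) + (b:ℚ)/((n:ℕ):ℚ)) := by
  have hn := luk_npos n
  rw [← add_div]
  rcases le_total (a+b) (n:ℕ) with h | h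
  · rw [min_eq_right h, min_eq_right (by rw [div_le_one hn]; exact_mod_cast h)]
    push_cast; ring
  · rw [min_eq_left h, min_eq_left (by rw [one_le_div hn]; exact_mod_cast h), div_self hn.ne']

lemma odot_val_one_left {a b : ℚ} (ha : a = 1) (hb0 : 0 ≤ b) (hb1 : b ≤ 1) :
    1 - min 1 ((1-a) + (1-b)) = b := by
  subst ha
  rw [min_eq_right (by linarith)]; ring

lemma odot_val_one_right {a b : ℚ} (hb : b = 1) (ha0 : 0 ≤ a) (ha1 : a ≤ 1) :
    1 - min 1 ((1-a) + (1-b)) = a := by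
  subst hb
  rw [min_eq_right (by linarith)]; ring

lemma odot_val_zero_left {a b : ℚ} (ha : a = 0) (hb1 : b ≤ 1) :
    1 - min 1 ((1-a) + (1-b)) = 0 := by
  subst ha
  rw [min_eq_left (by linarith)]; ring

lemma odot_val_zero_right {a b : ℚ} (hb : b = 0) (ha1 : a ≤ 1) :
    1 - min 1 ((1-a) + (1-b)) = 0 := by
  subst hb
  rw [min_eq_left (by linarith)]; ring

lemma dist_val_zero_iff {a b : ℚ} (ha0 : 0 ≤ a) (ha1 : a ≤ 1) (hb0 : 0 ≤ b) (hb1 : b ≤ 1) :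
    min 1 ((1 - min 1 ((1-a) + b)) + (1 - min 1 ((1-b) + a))) = 0 ↔ a = b := by
  rw [min_def, min_def, min_def]
  split_ifs <;> constructor <;> intro h <;> linarith

lemma dbl_scalar {w : ℚ} (hw : 0 ≤ w) :
    min 1 (min 1 w + min 1 w) = min 1 (2*w) := by
  rw [min_def, min_def, min_def]
  split_ifs <;> linarith

section Main
variable {l : ℕ} {n : Fin l → ℕ+} {S : Set (∀ i, Luk (n i))}

def opA (x y : ∀ m, Luk (n m)) : ∀ m, Luk (n m) := fun m => lukOplus (x m) (y m)
def negA (x : ∀ m, Luk (n m)) : ∀ m, Luk (n m) := fun m => lukNeg (x m)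
def odotA (x y : ∀ m, Luk (n m)) : ∀ m, Luk (n m) :=
  fun m => lukNeg (lukOplus (lukNeg (x m)) (lukNeg (y m)))
def dblA (x : ∀ m, Luk (n m)) : ∀ m, Luk (n m) := fun m => lukOplus (x m) (x m)

lemma opA_val (x y : ∀ m, Luk (n m)) (m : Fin l) :
    (opA x y m).1 = min 1 ((x m).1 + (y m).1) := rfl
lemma negA_val (x : ∀ m, Luk (n m)) (m : Fin l) : (negA x m).1 = 1 - (x m).1 := rfl
lemma odotA_val (x y : ∀ m, Luk (n m)) (m : Fin l) :
    (odotA x y m).1 = 1 - min 1 ((1 - (x m).1) + (1 - (y m).1)) := by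
  show 1 - min 1 ((lukNeg (x m)).1 + (lukNeg (y m)).1) = _
  rfl

lemma full_of_surj
    (hdist : ∀ i j : Fin l, i ≠ j → n i ≠ n j)
    (h0 : (fun i => lukZero (n i)) ∈ S)
    (hop : ∀ x ∈ S, ∀ y ∈ S, (fun i => lukOplus (x i) (y i)) ∈ S)
    (hneg : ∀ x ∈ S, (fun i => lukNeg (x i)) ∈ S)
    (hsurj : ∀ i (x : Luk (n i)), ∃ s ∈ S, s i = x) :
    S = Set.univ := by
  classical
  -- distance elements
  have hdistkey : ∀ x ∈ S, ∀ y ∈ S, ∀ i j : Fin l,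
      (∀ s ∈ S, ((s i).1 = 0 ↔ (s j).1 = 0)) →
      (x i).1 = (y i).1 → (x j).1 = (y j).1 := by
    intro x hx y hy i j hblk hxy
    set d : ∀ m, Luk (n m) := fun m =>
      lukOplus (lukNeg (lukOplus (lukNeg (x m)) (y m)))
        (lukNeg (lukOplus (lukNeg (y m)) (x m))) with hd
    have hdS : d ∈ S :=
      hop _ (hneg _ (hop _ (hneg _ hx) _ hy)) _ (hneg _ (hop _ (hneg _ hy) _ hx))
    have hval : ∀ m, (d m).1 =
        min 1 ((1 - min 1 ((1-(x m).1) + (y m).1)) + (1 - min 1 ((1-(y m).1) + (x m).1))) := by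
      intro m; rfl
    have hdi : (d i).1 = 0 := by
      rw [hval i]
      exact (dist_val_zero_iff (luk_nonneg _) (luk_le_one _) (luk_nonneg _) (luk_le_one _)).mpr hxy
    have hdj : (d j).1 = 0 := ((hblk d hdS).mp hdi)
    rw [hval j] at hdj
    exact (dist_val_zero_iff (luk_nonneg _) (luk_le_one _) (luk_nonneg _) (luk_le_one _)).mp hdj
  by_cases hblock : ∃ i j : Fin l, i ≠ j ∧ ∀ s ∈ S, ((s i).1 = 0 ↔ (s j).1 = 0)
  · -- graph of isomorphism: contradiction with hdist
    exfalso
    obtain ⟨i, j, hij, hblk⟩ := hblock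
    have hblk' : ∀ s ∈ S, ((s j).1 = 0 ↔ (s i).1 = 0) := fun s hs => (hblk s hs).symm
    choose σ hσS hσval using hsurj i
    set φ : Luk (n i) → Luk (n j) := fun a => σ a j with hφ
    have hinj : Function.Injective φ := by
      intro a a' hval
      have : (σ a i).1 = (σ a' i).1 := by
        apply hdistkey _ (hσS a) _ (hσS a') j i hblk'
        exact congrArg Subtype.val hval
      rw [hσval a, hσval a'] at this
      exact Subtype.ext this
    have hsur : Function.Surjective φ := by
      intro b
      obtain ⟨t, htS, htj⟩ := hsurj j b
      refine ⟨t i, Subtype.ext ?_⟩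
      have : (σ (t i) j).1 = (t j).1 := by
        apply hdistkey _ (hσS (t i)) _ htS i j hblk
        rw [hσval (t i)]
      rw [htj] at this
      exact this
    have e : Fin ((n i : ℕ)+1) ≃ Fin ((n j : ℕ)+1) :=
      ((lukEquiv (n i)).trans (Equiv.ofBijective φ ⟨hinj, hsur⟩)).trans (lukEquiv (n j)).symm
    have hcard : (n i : ℕ) + 1 = (n j : ℕ) + 1 := by
      have := Fintype.card_congr e
      simpa using this
    exact hdist i j hij (PNat.coe_injective (by omega))
  · push_neg at hblock
    set N := Finset.univ.sup (fun i : Fin l => (n i : ℕ)) with hN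
    have hNle : ∀ i, ((n i : ℕ) : ℚ) ≤ 2^N := by
      intro i
      have h1 : (n i : ℕ) ≤ N := by rw [hN]; exact Finset.le_sup (f := fun i : Fin l => (n i : ℕ)) (Finset.mem_univ i)
      have h2 : N < 2^N := Nat.lt_two_pow_self
      have : (n i : ℕ) ≤ 2^N := h1.trans h2.le
      exact_mod_cast this
    have dblmem : ∀ t, ∀ x ∈ S, dblA^[t] x ∈ S := by
      intro t
      induction t with
      | zero => intro x hx; simpa using hx
      | succ t ih =>
        intro x hx
        rw [Function.iterate_succ_apply']
        exact hop _ (ih x hx) _ (ih x hx)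
    have dblval : ∀ t (x : ∀ m, Luk (n m)) (m : Fin l),
        ((dblA^[t] x) m).1 = min 1 ((2:ℚ)^t * (x m).1) := by
      intro t
      induction t with
      | zero =>
        intro x m
        rw [Function.iterate_zero_apply, pow_zero, one_mul,
          min_eq_right (luk_le_one _)]
      | succ t ih =>
        intro x m
        rw [Function.iterate_succ_apply']
        show min 1 (((dblA^[t] x) m).1 + ((dblA^[t] x) m).1) = _
        rw [ih x m, dbl_scalar (mul_nonneg (by positivity) (luk_nonneg _))]
        ring_nf
    have sig1 : ∀ (x : ∀ m, Luk (n m)) (m : Fin l), (x m).1 ≠ 0 →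
        ((dblA^[N] x) m).1 = 1 := by
      intro x m hx
      rw [dblval]
      have h1 := hNle m
      have h2 := luk_pos_ge (x m) hx
      have h3 := luk_npos (n m)
      have h4 : (0:ℚ) < 2^N := by positivity
      rw [min_eq_left]
      rw [div_le_iff₀ h3] at h2
      nlinarith
    have sig0 : ∀ (x : ∀ m, Luk (n m)) (m : Fin l), (x m).1 = 0 →
        ((dblA^[N] x) m).1 = 0 := by
      intro x m hx
      rw [dblval, hx, mul_zero]
      simp
    have hones : negA (fun m => lukZero (n m)) ∈ S := hneg _ h0
    have honesval : ∀ m, (negA (fun m => lukZero (n m)) m).1 = 1 := by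
      intro m; rw [negA_val]; simp [lukZero]
    have hatom : ∀ i : Fin l, ∃ e ∈ S, (e i).1 = 1 ∧ ∀ j, j ≠ i → (e j).1 = 0 := by
      intro i
      have hc : ∀ j : Fin l, ∃ c ∈ S, (c i).1 = 1 ∧ (j ≠ i → (c j).1 = 0) := by
        intro j
        by_cases hji : j = i
        · exact ⟨_, hones, honesval i, fun h => absurd hji h⟩
        · obtain ⟨s, hs, hsiff⟩ := hblock j i hji
          by_cases hsi : (s i).1 = 0
          · have hsj : (s j).1 ≠ 0 := by tauto
            refine ⟨negA (dblA^[N] s), hneg _ (dblmem N s hs), ?_, fun _ => ?_⟩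
            · rw [negA_val, sig0 s i hsi]; ring
            · rw [negA_val, sig1 s j hsj]; ring
          · have hsj : (s j).1 = 0 := by tauto
            exact ⟨dblA^[N] s, dblmem N s hs, sig1 s i hsi, fun _ => sig0 s j hsj⟩
      choose c hcS hci hcj using hc
      refine ⟨(List.finRange l).foldr (fun j acc => odotA (c j) acc)
        (negA (fun m => lukZero (n m))), ?_, ?_, ?_⟩
      · have : ∀ L : List (Fin l),
            (L.foldr (fun j acc => odotA (c j) acc) (negA (fun m => lukZero (n m)))) ∈ S := by
          intro L
          induction L with
          | nil => exact hones
          | cons a L ih => exact hneg _ (hop _ (hneg _ (hcS a)) _ (hneg _ ih))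
        exact this _
      · have : ∀ L : List (Fin l),
            ((L.foldr (fun j acc => odotA (c j) acc) (negA (fun m => lukZero (n m)))) i).1 = 1 := by
          intro L
          induction L with
          | nil => exact honesval i
          | cons a L ih =>
            show (odotA (c a) _ i).1 = 1
            rw [odotA_val, odot_val_one_left (hci a) (luk_nonneg _) (luk_le_one _), ih]
        exact this _
      · intro j hji
        have : ∀ L : List (Fin l), j ∈ L →
            ((L.foldr (fun j acc => odotA (c j) acc) (negA (fun m => lukZero (n m)))) j).1 = 0 := by
          intro L
          induction L with
          | nil => intro h; simp at h
          | cons a L ih =>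
            intro hmem
            show (odotA (c a) _ j).1 = 0
            by_cases haj : a = j
            · subst haj
              rw [odotA_val, odot_val_zero_left (hcj a hji) (luk_le_one _)]
            · have : j ∈ L := by
                rcases List.mem_cons.mp hmem with h | h
                · exact absurd h.symm haj
                · exact h
              rw [odotA_val, odot_val_zero_right (ih this) (luk_le_one _)]
        exact this _ (List.mem_finRange j)
    -- now S is everything
    apply Set.eq_univ_of_forall
    intro x
    choose e heS hei hej using hatom
    choose s hsS hsv using fun i => hsurj i (x i)
    have hmem : ∀ L : List (Fin l),
        (L.foldr (fun i acc => opA (odotA (s i) (e i)) acc) (fun m => lukZero (n m))) ∈ S := by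
      intro L
      induction L with
      | nil => exact h0
      | cons a L ih =>
        exact hop _ (hneg _ (hop _ (hneg _ (hsS a)) _ (hneg _ (heS a)))) _ ih
    have hval : ∀ L : List (Fin l), L.Nodup → ∀ m : Fin l,
        ((L.foldr (fun i acc => opA (odotA (s i) (e i)) acc) (fun m => lukZero (n m))) m).1 =
          if m ∈ L then (x m).1 else 0 := by
      intro L
      induction L with
      | nil => intro _ m; simp [lukZero]
      | cons a L ih =>
        intro hnd m
        have hndL := hnd.of_cons
        have haL : a ∉ L := by
          intro h
          exact (List.nodup_cons.mp hnd).1 h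
        show (opA (odotA (s a) (e a)) _ m).1 = _
        rw [opA_val, odotA_val]
        by_cases ham : a = m
        · subst ham
          rw [odot_val_one_right (hei a) (luk_nonneg _) (luk_le_one _)]
          rw [ih hndL a, if_neg haL, add_zero, if_pos List.mem_cons_self]
          have : (s a a).1 = (x a).1 := congrArg Subtype.val (hsv a)
          rw [this, min_eq_right (luk_le_one _)]
        · rw [odot_val_zero_right (hej a m (fun h => ham h.symm)) (luk_le_one _), zero_add]
          rw [ih hndL m]
          by_cases hmL : m ∈ L
          · rw [if_pos hmL, if_pos (List.mem_cons_of_mem a hmL), min_eq_right (luk_le_one _)]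
          · rw [if_neg hmL, if_neg (by
              simp only [List.mem_cons]
              push_neg
              exact ⟨fun h => ham h.symm, hmL⟩), min_eq_right (by norm_num)]
    have : (List.finRange l).foldr (fun i acc => opA (odotA (s i) (e i)) acc)
        (fun m => lukZero (n m)) = x := by
      funext m
      apply Subtype.ext
      rw [hval _ (List.nodup_finRange l) m, if_pos (List.mem_finRange m)]
    rw [← this]
    exact hmem _

end Main


/-- Every proper subalgebra of Ł_(n 0) × ⋯ × Ł_(n (l-1)) (with the n i pairwise
distinct) embeds into some ∏ Ł_(d i) with d i ∣ n i for all i and d j ≠ n j for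
some j. -/
theorem proper_subalg_embeds (l : ℕ) (hl : 1 ≤ l) (n : Fin l → ℕ+)
    (hdist : ∀ i j : Fin l, i ≠ j → n i ≠ n j)
    (S : Set (∀ i, Luk (n i)))
    (h0 : (fun i => lukZero (n i)) ∈ S)
    (hop : ∀ x ∈ S, ∀ y ∈ S, (fun i => lukOplus (x i) (y i)) ∈ S)
    (hneg : ∀ x ∈ S, (fun i => lukNeg (x i)) ∈ S)
    (hproper : S ≠ Set.univ) :
    ∃ d : Fin l → ℕ+, (∀ i, (d i : ℕ) ∣ (n i : ℕ)) ∧ (∃ j, d j ≠ n j) ∧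
      ∃ f : S → ∀ i, Luk (d i), Function.Injective f ∧
        (∀ (x y : ∀ i, Luk (n i)) (hx : x ∈ S) (hy : y ∈ S),
          f ⟨fun i => lukOplus (x i) (y i), hop x hx y hy⟩ =
            fun i => lukOplus (f ⟨x, hx⟩ i) (f ⟨y, hy⟩ i)) ∧
        (∀ (x : ∀ i, Luk (n i)) (hx : x ∈ S),
          f ⟨fun i => lukNeg (x i), hneg x hx⟩ = fun i => lukNeg (f ⟨x, hx⟩ i)) ∧
        (f ⟨fun i => lukZero (n i), h0⟩ = fun i => lukZero (d i)) := by
  classical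
  by_cases hsurj : ∀ i (x : Luk (n i)), ∃ s ∈ S, s i = x
  · exact absurd (full_of_surj hdist h0 hop hneg hsurj) hproper
  push_neg at hsurj
  obtain ⟨i₀, x₀, hx₀⟩ := hsurj
  set K : Fin l → Set ℕ := fun i => {k | ∃ s ∈ S, (s i).1 = (k:ℚ)/((n i : ℕ):ℚ)} with hKdef
  have hle : ∀ i, ∀ k ∈ K i, k ≤ (n i : ℕ) := by
    intro i k hk
    obtain ⟨s, hs, hv⟩ := hk
    have := luk_le_one (s i)
    rw [hv, div_le_one (luk_npos (n i))] at this
    exact_mod_cast this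
  have h0K : ∀ i, 0 ∈ K i := by
    intro i
    exact ⟨_, h0, by simp [lukZero]⟩
  have hnK : ∀ i, (n i : ℕ) ∈ K i := by
    intro i
    refine ⟨_, hneg _ h0, ?_⟩
    show (lukNeg (lukZero (n i))).1 = _
    show 1 - (lukZero (n i)).1 = _
    show 1 - 0 = _
    rw [div_self (luk_npos (n i)).ne']
    ring
  have haddK : ∀ i, ∀ a ∈ K i, ∀ b ∈ K i, min (n i : ℕ) (a+b) ∈ K i := by
    intro i a ha b hb
    obtain ⟨s, hs, hsv⟩ := ha
    obtain ⟨t, ht, htv⟩ := hb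
    refine ⟨_, hop s hs t ht, ?_⟩
    show (lukOplus (s i) (t i)).1 = _
    show min 1 ((s i).1 + (t i).1) = _
    rw [hsv, htv, rat_min_div]
  have hnegK : ∀ i, ∀ a ∈ K i, (n i : ℕ) - a ∈ K i := by
    intro i a ha
    obtain ⟨s, hs, hsv⟩ := id ha
    refine ⟨_, hneg s hs, ?_⟩
    show 1 - (s i).1 = _
    rw [hsv, Nat.cast_sub (hle i a ha), sub_div, div_self (luk_npos (n i)).ne']
  have hmain : ∀ i, ∃ g : ℕ, g ∣ (n i : ℕ) ∧ 0 < g ∧ (∀ k ∈ K i, g ∣ k) ∧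
      (∀ m, m * g ≤ (n i : ℕ) → m * g ∈ K i) :=
    fun i => kset_main (n i).pos (h0K i) (hnK i) (hle i) (haddK i) (hnegK i)
  choose g hg1 hg2 hg3 hg4 using hmain
  refine ⟨fun i => ⟨(n i : ℕ) / (g i),
      Nat.div_pos (Nat.le_of_dvd (n i).pos (hg1 i)) (hg2 i)⟩,
    fun i => Nat.div_dvd_of_dvd (hg1 i), ?_, ?_⟩
  · -- d i₀ ≠ n i₀
    refine ⟨i₀, ?_⟩
    obtain ⟨k₀, hk₀le, hk₀v⟩ := x₀.2
    have hk₀K : k₀ ∉ K i₀ := by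
      intro hk
      obtain ⟨s, hs, hsv⟩ := hk
      exact hx₀ s hs (Subtype.ext (hsv.trans hk₀v.symm))
    have hgne : g i₀ ≠ 1 := by
      intro h1
      exact hk₀K (by simpa [h1] using hg4 i₀ k₀ (by simpa [h1] using hk₀le))
    have hglt : (n i₀ : ℕ) / g i₀ < (n i₀ : ℕ) :=
      Nat.div_lt_self (n i₀).pos (by have := hg2 i₀; omega)
    intro h
    exact hglt.ne (congrArg (fun p : ℕ+ => (p : ℕ)) h)
  · -- the embedding
    have hval : ∀ (s : S) (i : Fin l), ∃ m : ℕ, m ≤ (n i : ℕ) / g i ∧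
        (s.1 i).1 = (m:ℚ)/(((n i : ℕ) / g i : ℕ):ℚ) := by
      intro s i
      obtain ⟨k, hk, he⟩ := (s.1 i).2
      have hkK : k ∈ K i := ⟨s.1, s.2, he⟩
      have hgk := hg3 i k hkK
      refine ⟨k / g i, Nat.div_le_div_right hk, ?_⟩
      rw [he]
      have hgpos := hg2 i
      have hkg : k / g i * g i = k := Nat.div_mul_cancel hgk
      have hng : (n i : ℕ) / g i * g i = (n i : ℕ) := Nat.div_mul_cancel (hg1 i)
      have hdpos : 0 < (n i : ℕ) / g i := Nat.div_pos (Nat.le_of_dvd (n i).pos (hg1 i)) hgpos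
      rw [div_eq_div_iff (luk_npos (n i)).ne' (by exact_mod_cast hdpos.ne')]
      have hnat : k * ((n i : ℕ) / g i) = k / g i * (n i : ℕ) := by
        conv_lhs => rw [← hkg]
        conv_rhs => rw [← hng]
        ring
      exact_mod_cast hnat
    refine ⟨fun s => fun i => ⟨(s.1 i).1, hval s i⟩, ?_, ?_, ?_, ?_⟩
    · intro a b hab
      apply Subtype.ext
      funext i
      have h2 := congrFun hab i
      have h3 := congrArg Subtype.val h2
      exact Subtype.ext h3
    · intro x y hx hy
      funext i
      exact Subtype.ext rfl
    · intro x hx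
      funext i
      exact Subtype.ext rfl
    · funext i
      exact Subtype.ext rfl
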